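/- Let n = m + r with m ≥ 2, τ ∈ {1,−1}, let A', D' be r×r real symmetric matrices, and set A = blockDiag(τF_m, A') and D = blockDiag(τE_m, D'). Let b, e ∈ ℝⁿ and c ∈ ℝ, and suppose the Slater condition holds. Then problem (P) is unbounded from below. -/

import Mathlib

open Matrix

/-- The `m × m` anti-diagonal matrix `E_m`: `(E_m)_{i,j} = 1` iff `i + j = m + 1`
(with 1-based indexing). -/
noncomputable def Emat (m : ℕ) : Matrix (Fin m) (Fin m) ℝ :=
  fun i j => if (i : ℕ) + (j : ℕ) + 1 = m then 1 else 0

/-- The `m × m` lower striped matrix `F_m`: `(F_m)_{i,j} = 1` iff `i + j = m + 2`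
(with 1-based indexing). -/
noncomputable def Fmat (m : ℕ) : Matrix (Fin m) (Fin m) ℝ :=
  fun i j => if (i : ℕ) + (j : ℕ) = m then 1 else 0

private lemma key_arith (τ h0 f0 γ δ κ α β M : ℝ) (hτ : τ ≠ 0) (hh0 : h0 < 0) :
    ∃ t s : ℝ, h0 + γ*t + δ*s + κ*s^2/2 ≤ 0 ∧ f0 + α*t + β*s + τ*(t*s) < M := by
  by_cases hγ : γ = 0
  · -- pick s small with α + τ s ≠ 0
    have hden : (0:ℝ) < |δ| + |κ| + 1 := by positivity
    set ε : ℝ := min 1 ((-h0)/(|δ| + |κ| + 1)) with hεdef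
    have hε0 : 0 < ε := lt_min one_pos (div_pos (by linarith) hden)
    have hbound : ∀ s : ℝ, 0 ≤ s → s ≤ ε → δ*s + κ*s^2/2 ≤ -h0 := by
      intro s hs0 hsε
      have h1 : ε ≤ 1 := min_le_left _ _
      have h2 : ε ≤ (-h0)/(|δ| + |κ| + 1) := min_le_right _ _
      have h2' : ε * (|δ| + |κ| + 1) ≤ -h0 := by
        rw [le_div_iff₀ hden] at h2; exact h2
      have hδ : δ*s ≤ |δ| * ε := by
        calc δ*s ≤ |δ| * s := mul_le_mul_of_nonneg_right (le_abs_self δ) hs0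
        _ ≤ |δ| * ε := mul_le_mul_of_nonneg_left hsε (abs_nonneg δ)
      have hs2 : s^2 ≤ ε := by nlinarith
      have hκ : κ*s^2/2 ≤ |κ| * ε := by
        nlinarith [le_abs_self κ, abs_nonneg κ, sq_nonneg s]
      nlinarith [abs_nonneg δ, abs_nonneg κ]
    obtain ⟨s, hs0, hsε, hsne⟩ : ∃ s : ℝ, 0 ≤ s ∧ s ≤ ε ∧ α + τ*s ≠ 0 := by
      by_cases h : α + τ*ε = 0
      · refine ⟨ε/2, by positivity, by linarith, ?_⟩
        intro h2
        have h3 : τ * (ε/2) = 0 := by linarith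
        rcases mul_eq_zero.mp h3 with h4 | h4
        · exact hτ h4
        · linarith
      · exact ⟨ε, le_of_lt hε0, le_refl _, h⟩
    refine ⟨(M - f0 - β*s - 1)/(α+τ*s), s, ?_, ?_⟩
    · have := hbound s hs0 hsε
      rw [hγ]; linarith
    · have h1 : α*((M - f0 - β*s - 1)/(α+τ*s)) + τ*((M - f0 - β*s - 1)/(α+τ*s)*s)
          = (M - f0 - β*s - 1)/(α+τ*s) * (α+τ*s) := by ring
      have h2 := div_mul_cancel₀ (M - f0 - β*s - 1) hsne
      linarith [h1, h2]
  · -- γ ≠ 0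
    set sg : ℝ := if 0 < γ then 1 else -1 with hsgdef
    have hsgsq : sg * sg = 1 := by
      by_cases h : 0 < γ <;> simp [hsgdef, h]
    have hγsg : 0 < γ * sg := by
      by_cases h : 0 < γ
      · simp only [hsgdef, if_pos h]; linarith
      · simp only [hsgdef, if_neg h]
        have : γ < 0 := lt_of_le_of_ne (not_lt.mp h) hγ
        nlinarith
    set s : ℝ := (sg - α)/τ with hsdef
    have hαs : α + τ*s = sg := by rw [hsdef, mul_div_cancel₀ (sg - α) hτ]; ring
    set C : ℝ := max ((h0 + δ*s + κ*s^2/2)/(γ*sg)) (f0 + β*s - M + 1) with hCdef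
    refine ⟨-sg * C, s, ?_, ?_⟩
    · have hC1 : (h0 + δ*s + κ*s^2/2) ≤ C * (γ*sg) :=
        (div_le_iff₀ hγsg).mp (le_max_left _ _)
      have h2 : γ*(-sg*C) = -(C*(γ*sg)) := by ring
      linarith [hC1, h2]
    · have hC2 : f0 + β*s - M + 1 ≤ C := le_max_right _ _
      have h5 : α*(-sg*C) + τ*(-sg*C*s) = -C := by
        calc α*(-sg*C) + τ*(-sg*C*s) = (-sg*C) * (α + τ*s) := by ring
        _ = -(sg*sg)*C := by rw [hαs]; ring
        _ = -C := by rw [hsgsq]; ring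
      linarith [h5, hC2]

/-- Theorem 2.4 of Jiang–Li–Wu: if a type B block pair `(τ F_m, τ E_m)` with `m ≥ 2`
occurs in the canonical form, then the GTRS `(P)` is unbounded from below
(assuming the Slater condition). -/
theorem stmt_5 (m r : ℕ) (hm : 2 ≤ m) (τ : ℝ) (hτ : τ = 1 ∨ τ = -1)
    (A' D' : Matrix (Fin r) (Fin r) ℝ) (hA' : A'.IsSymm) (hD' : D'.IsSymm)
    (A D : Matrix (Fin (m + r)) (Fin (m + r)) ℝ)
    (hA : A = Matrix.reindex finSumFinEquiv finSumFinEquiv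
      (Matrix.fromBlocks (τ • Fmat m) 0 0 A'))
    (hD : D = Matrix.reindex finSumFinEquiv finSumFinEquiv
      (Matrix.fromBlocks (τ • Emat m) 0 0 D'))
    (b e : Fin (m + r) → ℝ) (c : ℝ)
    (hslater : ∃ x : Fin (m + r) → ℝ, (1/2) * (x ⬝ᵥ A.mulVec x) + b ⬝ᵥ x + c < 0) :
    ∀ M : ℝ, ∃ x : Fin (m + r) → ℝ,
      (1/2) * (x ⬝ᵥ A.mulVec x) + b ⬝ᵥ x + c ≤ 0 ∧
      (1/2) * (x ⬝ᵥ D.mulVec x) + e ⬝ᵥ x < M := by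
  have hτ0 : τ ≠ 0 := by rcases hτ with h | h <;> rw [h] <;> norm_num
  have h0m : 0 < m := by omega
  have h1m : m - 1 < m := by omega
  set em : Fin m ⊕ Fin r ≃ Fin (m + r) := finSumFinEquiv with hem
  set j0 : Fin (m + r) := em (Sum.inl ⟨0, h0m⟩) with hj0
  set j1 : Fin (m + r) := em (Sum.inl ⟨m - 1, h1m⟩) with hj1
  have hj01 : j0 ≠ j1 := by
    rw [hj0, hj1]
    intro h
    have h2 := Sum.inl.inj (em.injective h)
    have h3 : (0 : ℕ) = m - 1 := congrArg Fin.val h2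
    omega
  -- symmetry
  have hFs : (Fmat m)ᵀ = Fmat m := by
    ext i j
    simp only [transpose_apply, Fmat]
    rw [Nat.add_comm (j : ℕ) (i : ℕ)]
  have hEs : (Emat m)ᵀ = Emat m := by
    ext i j
    simp only [transpose_apply, Emat]
    rw [Nat.add_comm (j : ℕ) (i : ℕ)]
  have hAs : Aᵀ = A := by
    rw [hA, transpose_reindex, fromBlocks_transpose, transpose_smul, hFs,
      transpose_zero, transpose_zero, hA'.eq]
  have hDs : Dᵀ = D := by
    rw [hD, transpose_reindex, fromBlocks_transpose, transpose_smul, hEs,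
      transpose_zero, transpose_zero, hD'.eq]
  -- column facts
  have hAu : A *ᵥ (Pi.single j0 1 : Fin (m+r) → ℝ) = 0 := by
    funext i
    simp only [mulVec_single, Pi.zero_apply, Pi.smul_apply, smul_eq_mul, mul_one, op_smul_eq_mul, col_apply]
    rw [hA]
    simp only [reindex_apply, submatrix_apply, hj0, Equiv.symm_apply_apply]
    cases hsi : em.symm i with
    | inl a =>
      rw [fromBlocks_apply₁₁]
      simp only [Matrix.smul_apply, smul_eq_mul, Fmat]
      rw [if_neg (show ¬((a:ℕ) + ((⟨0, h0m⟩ : Fin m):ℕ) = m) by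
        have := a.isLt; simp; omega)]
      ring
    | inr a =>
      rw [fromBlocks_apply₂₁]
      simp
  have hDu : D *ᵥ (Pi.single j0 1 : Fin (m+r) → ℝ) = τ • (Pi.single j1 1 : Fin (m+r) → ℝ) := by
    funext i
    simp only [mulVec_single, Pi.zero_apply, Pi.smul_apply, smul_eq_mul, mul_one, op_smul_eq_mul, col_apply]
    rw [hD]
    simp only [reindex_apply, submatrix_apply, hj0, Equiv.symm_apply_apply]
    have hi : i = em (em.symm i) := (em.apply_symm_apply i).symm
    cases hsi : em.symm i with
    | inl a =>
      rw [fromBlocks_apply₁₁]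
      by_cases hc : (a : ℕ) = m - 1
      · have hij : i = j1 := by
          rw [hi, hsi, hj1]; congr 1; exact congrArg Sum.inl (Fin.ext hc)
        have hcond : (a : ℕ) + (0:ℕ) + 1 = m := by omega
        have hRHS : (Pi.single j1 1 : Fin (m+r) → ℝ) i = 1 := by
          rw [hij, Pi.single_eq_same]
        simp only [Matrix.smul_apply, smul_eq_mul, Emat, hRHS]
        rw [if_pos (by first | omega | (simp; omega))]
        all_goals ring
      · have hij : i ≠ j1 := by
          intro h
          rw [h, hj1, Equiv.symm_apply_apply] at hsi
          have h2 := congrArg Fin.val (Sum.inl.inj hsi)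
          simp at h2
          omega
        have hcond : ¬ ((a : ℕ) + (0:ℕ) + 1 = m) := by have := a.isLt; omega
        simp [Emat, Matrix.smul_apply, hcond, Pi.single_eq_of_ne hij]
    | inr a =>
      rw [fromBlocks_apply₂₁]
      have hij : i ≠ j1 := by
        intro h
        rw [h, hj1, Equiv.symm_apply_apply] at hsi
        exact Sum.inl_ne_inr hsi
      simp [Pi.single_eq_of_ne hij]
  have hDv : D *ᵥ (Pi.single j1 1 : Fin (m+r) → ℝ) = τ • (Pi.single j0 1 : Fin (m+r) → ℝ) := by
    funext i
    simp only [mulVec_single, Pi.zero_apply, Pi.smul_apply, smul_eq_mul, mul_one, op_smul_eq_mul, col_apply]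
    rw [hD]
    simp only [reindex_apply, submatrix_apply, hj1, Equiv.symm_apply_apply]
    have hi : i = em (em.symm i) := (em.apply_symm_apply i).symm
    cases hsi : em.symm i with
    | inl a =>
      rw [fromBlocks_apply₁₁]
      by_cases hc : (a : ℕ) = 0
      · have hij : i = j0 := by
          rw [hi, hsi, hj0]; congr 1; exact congrArg Sum.inl (Fin.ext hc)
        have hcond : (a : ℕ) + (m - 1) + 1 = m := by omega
        have hRHS : (Pi.single j0 1 : Fin (m+r) → ℝ) i = 1 := by
          rw [hij, Pi.single_eq_same]
        simp only [Matrix.smul_apply, smul_eq_mul, Emat, hRHS]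
        rw [if_pos (by first | omega | (simp; omega))]
        all_goals ring
      · have hij : i ≠ j0 := by
          intro h
          rw [h, hj0, Equiv.symm_apply_apply] at hsi
          have h2 := congrArg Fin.val (Sum.inl.inj hsi)
          simp at h2
          omega
        have hcond : ¬ ((a : ℕ) + (m - 1) + 1 = m) := by have := a.isLt; omega
        simp [Emat, Matrix.smul_apply, hcond, Pi.single_eq_of_ne hij]
    | inr a =>
      rw [fromBlocks_apply₂₁]
      have hij : i ≠ j0 := by
        intro h
        rw [h, hj0, Equiv.symm_apply_apply] at hsi
        exact Sum.inl_ne_inr hsi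
      simp [Pi.single_eq_of_ne hij]
  -- symmetric bilinear form manipulation
  have hsym : ∀ (Mx : Matrix (Fin (m+r)) (Fin (m+r)) ℝ), Mxᵀ = Mx →
      ∀ w y : Fin (m+r) → ℝ, w ⬝ᵥ (Mx *ᵥ y) = (Mx *ᵥ w) ⬝ᵥ y := by
    intro Mx hMx w y
    rw [dotProduct_mulVec]
    congr 1
    conv_lhs => rw [← hMx]
    rw [vecMul_transpose]
  -- scalar dot product facts
  have huv : (Pi.single j0 1 : Fin (m+r) → ℝ) ⬝ᵥ (Pi.single j1 1 : Fin (m+r) → ℝ) = 0 := by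
    rw [single_dotProduct, one_mul, Pi.single_eq_of_ne hj01]
  have hvu : (Pi.single j1 1 : Fin (m+r) → ℝ) ⬝ᵥ (Pi.single j0 1 : Fin (m+r) → ℝ) = 0 := by
    rw [single_dotProduct, one_mul, Pi.single_eq_of_ne (Ne.symm hj01)]
  have huu : (Pi.single j0 1 : Fin (m+r) → ℝ) ⬝ᵥ (Pi.single j0 1 : Fin (m+r) → ℝ) = 1 := by
    rw [single_dotProduct, one_mul, Pi.single_eq_same]
  have hvv : (Pi.single j1 1 : Fin (m+r) → ℝ) ⬝ᵥ (Pi.single j1 1 : Fin (m+r) → ℝ) = 1 := by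
    rw [single_dotProduct, one_mul, Pi.single_eq_same]
  have hsj10 : (Pi.single j1 1 : Fin (m+r) → ℝ) j0 = 0 := Pi.single_eq_of_ne hj01 1
  have hsj01 : (Pi.single j0 1 : Fin (m+r) → ℝ) j1 = 0 := Pi.single_eq_of_ne (Ne.symm hj01) 1
  obtain ⟨x0, hx0⟩ := hslater
  intro M
  have hux0A : (Pi.single j0 1 : Fin (m+r) → ℝ) ⬝ᵥ (A *ᵥ x0) = 0 := by
    rw [hsym A hAs, hAu, zero_dotProduct]
  have huvA : (Pi.single j0 1 : Fin (m+r) → ℝ) ⬝ᵥ (A *ᵥ (Pi.single j1 1 : Fin (m+r) → ℝ)) = 0 := by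
    rw [hsym A hAs, hAu, zero_dotProduct]
  have hvx0A : (Pi.single j1 1 : Fin (m+r) → ℝ) ⬝ᵥ (A *ᵥ x0) = x0 ⬝ᵥ (A *ᵥ (Pi.single j1 1 : Fin (m+r) → ℝ)) := by
    rw [hsym A hAs, dotProduct_comm]
  have hux0D : (Pi.single j0 1 : Fin (m+r) → ℝ) ⬝ᵥ (D *ᵥ x0) = τ * x0 j1 := by
    rw [hsym D hDs, hDu, smul_dotProduct, single_dotProduct, smul_eq_mul, one_mul]
  have hvx0D : (Pi.single j1 1 : Fin (m+r) → ℝ) ⬝ᵥ (D *ᵥ x0) = τ * x0 j0 := by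
    rw [hsym D hDs, hDv, smul_dotProduct, single_dotProduct, smul_eq_mul, one_mul]
  obtain ⟨t, s, h1, h2⟩ := key_arith τ
    ((1/2) * (x0 ⬝ᵥ A.mulVec x0) + b ⬝ᵥ x0 + c)
    ((1/2) * (x0 ⬝ᵥ D.mulVec x0) + e ⬝ᵥ x0)
    (b j0)
    (x0 ⬝ᵥ (A *ᵥ (Pi.single j1 1 : Fin (m+r) → ℝ)) + b j1)
    ((Pi.single j1 1 : Fin (m+r) → ℝ) ⬝ᵥ (A *ᵥ (Pi.single j1 1 : Fin (m+r) → ℝ)))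
    (τ * x0 j1 + e j0)
    (τ * x0 j0 + e j1)
    M hτ0 hx0
  refine ⟨x0 + t • (Pi.single j0 1 : Fin (m+r) → ℝ) + s • (Pi.single j1 1 : Fin (m+r) → ℝ), ?_, ?_⟩
  · have hQA : (x0 + t • (Pi.single j0 1 : Fin (m+r) → ℝ) + s • (Pi.single j1 1 : Fin (m+r) → ℝ)) ⬝ᵥ
        A *ᵥ (x0 + t • (Pi.single j0 1 : Fin (m+r) → ℝ) + s • (Pi.single j1 1 : Fin (m+r) → ℝ)) =
        x0 ⬝ᵥ A *ᵥ x0 + 2*s*(x0 ⬝ᵥ (A *ᵥ (Pi.single j1 1 : Fin (m+r) → ℝ)))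
          + ((Pi.single j1 1 : Fin (m+r) → ℝ) ⬝ᵥ (A *ᵥ (Pi.single j1 1 : Fin (m+r) → ℝ)))*s^2 := by
      simp only [mulVec_add, mulVec_smul, dotProduct_add, add_dotProduct,
        dotProduct_smul, smul_dotProduct, smul_eq_mul, hAu, dotProduct_zero,
        smul_zero, mul_zero, add_zero, hux0A, huvA, hvx0A]
      ring
    have hbX : b ⬝ᵥ (x0 + t • (Pi.single j0 1 : Fin (m+r) → ℝ) + s • (Pi.single j1 1 : Fin (m+r) → ℝ)) =
        b ⬝ᵥ x0 + t * b j0 + s * b j1 := by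
      simp only [dotProduct_add, dotProduct_smul, smul_eq_mul, dotProduct_single, mul_one]
    rw [show A.mulVec = (A *ᵥ ·) from rfl] at *
    rw [hQA, hbX]
    nlinarith [h1]
  · have hQD : (x0 + t • (Pi.single j0 1 : Fin (m+r) → ℝ) + s • (Pi.single j1 1 : Fin (m+r) → ℝ)) ⬝ᵥ
        D *ᵥ (x0 + t • (Pi.single j0 1 : Fin (m+r) → ℝ) + s • (Pi.single j1 1 : Fin (m+r) → ℝ)) =
        x0 ⬝ᵥ D *ᵥ x0 + 2*τ*t*(x0 j1) + 2*τ*s*(x0 j0) + 2*τ*(t*s) := by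
      simp only [mulVec_add, mulVec_smul, dotProduct_add, add_dotProduct,
        dotProduct_smul, smul_dotProduct, smul_eq_mul, hDu, hDv, hux0D, hvx0D,
        dotProduct_single, single_dotProduct, mul_one, one_mul, huv, hvu, huu, hvv,
        Pi.add_apply, Pi.smul_apply, Pi.single_eq_same, hsj10, hsj01,
        mul_zero, zero_mul, add_zero]
      ring
    have heX : e ⬝ᵥ (x0 + t • (Pi.single j0 1 : Fin (m+r) → ℝ) + s • (Pi.single j1 1 : Fin (m+r) → ℝ)) =
        e ⬝ᵥ x0 + t * e j0 + s * e j1 := by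
      simp only [dotProduct_add, dotProduct_smul, smul_eq_mul, dotProduct_single, mul_one]
    rw [show D.mulVec = (D *ᵥ ·) from rfl] at *
    rw [hQD, heX]
    nlinarith [h2]
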